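/- arXiv:2207.09201 — 5 statements merged into one kernel-verified Lean document; each statement's English description precedes it below -/
import Mathlib

section
/- Let c_1, ..., c_m be clauses over Boolean variables x_1, ..., x_n such that no clause contains both (j,+) and (j,-) for any j. Define partial words w_1, ..., w_m in {0,1,DIAMOND}^n by: w_i[j] = 0 if (j,+) is in c_i, w_i[j] = 1 if (j,-) is in c_i, and w_i[j] = DIAMOND otherwise. Then the CNF formula {c_1, ..., c_m} is satisfiable if and only if there exists a word v in {0,1}^n that is not compatible with any of the partial words w_1, ..., w_m. -/
/-- The partial word associated with a clause `c` over variables indexed by `Fin n`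
(literals are pairs `(j, s)` with `s = true` for positive literals):
position `j` is `0` if `(j,+) ∈ c`, `1` if `(j,-) ∈ c`, and `DIAMOND` (here `none`)
otherwise. -/
def clauseWord {n : ℕ} (c : Finset (Fin n × Bool)) (j : Fin n) : Option Bool :=
  if (j, true) ∈ c then some false
  else if (j, false) ∈ c then some true
  else none

/-- A CNF formula `{c_1, ..., c_m}` (no clause containing both a variable and its negation)
is satisfiable iff there exists a word `v ∈ {0,1}^n` not compatible with any of the
partial words `w_1, ..., w_m` associated with the clauses. -/
theorem satisfiable_iff_exists_incompatible_word {n m : ℕ}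
    (c : Fin m → Finset (Fin n × Bool))
    (hc : ∀ i : Fin m, ∀ j : Fin n, ¬((j, true) ∈ c i ∧ (j, false) ∈ c i)) :
    (∃ α : Fin n → Bool, ∀ i : Fin m, ∃ l ∈ c i, α l.1 = l.2) ↔
      (∃ v : Fin n → Bool,
        ∀ i : Fin m, ¬(∀ j : Fin n, ∀ b : Bool, clauseWord (c i) j = some b → v j = b)) := by
  constructor
  · rintro ⟨α, hα⟩
    refine ⟨α, fun i hcomp => ?_⟩
    obtain ⟨⟨j, s⟩, hl, hval⟩ := hα i
    cases s with
    | true =>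
      have : clauseWord (c i) j = some false := by simp [clauseWord, hl]
      have := hcomp j false this
      simp [hval] at this
    | false =>
      have : clauseWord (c i) j = some true := by
        simp only [clauseWord]
        rw [if_neg (fun h => hc i j ⟨h, hl⟩), if_pos hl]
      have := hcomp j true this
      simp [hval] at this
  · rintro ⟨v, hv⟩
    refine ⟨v, fun i => ?_⟩
    by_contra hno
    push_neg at hno
    apply hv i
    intro j b hb
    simp only [clauseWord] at hb
    by_cases h1 : (j, true) ∈ c i
    · simp [h1] at hb
      have := hno (j, true) h1
      simp at this
      simp [this, ← hb]
    · rw [if_neg h1] at hb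
      by_cases h2 : (j, false) ∈ c i
      · simp [h2] at hb
        have := hno (j, false) h2
        simp at this
        simp [this, ← hb]
      · simp [h2] at hb
end

section
/- Let Sigma be an alphabet, $ a letter not in Sigma, u in Sigma^m with m >= 1, w a word over Sigma, and p an integer with m <= p. For 1 <= i <= m let u_i = u[1:i-1]u[i+1:m] be the word obtained from u by deleting its i-th letter, and set v = w $^{p+1} u_1 $^{p+1} u_2 ... $^{p+1} u_m. Then u is a minimal absent p-subsequence (pMAS) of v if and only if u is p-absent from w. -/
open List

/-- `v` is a `p`-subsequence of `w`: there is a contiguous factor `u` of `w`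
of length at most `p` such that `v` is a subsequence of `u`. -/
def PSubseq {α : Type*} (p : ℕ) (v w : List α) : Prop :=
  ∃ u : List α, u <:+: w ∧ u.length ≤ p ∧ v <+ u

/-- `v` is a minimal absent `p`-subsequence of `w`: `v` is not a `p`-subsequence of `w`,
but every proper subsequence of `v` is a `p`-subsequence of `w`. -/
def PMAS {α : Type*} (p : ℕ) (v w : List α) : Prop :=
  ¬PSubseq p v w ∧ ∀ v' : List α, v' <+ v → v' ≠ v → PSubseq p v' w

section Aux

variable {β : Type*}

/-- An infix of `A ++ (N ++ B)` shorter than `N` lies in `A ++ N` or in `N ++ B`. -/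
lemma aux_split {p : ℕ} {x A N B : List β} (hN : p < N.length)
    (hlen : x.length ≤ p) (hx : x <:+: A ++ (N ++ B)) :
    x <:+: A ++ N ∨ x <:+: N ++ B := by
  obtain ⟨s, t, h⟩ := hx
  have h' : s ++ (x ++ t) = A ++ (N ++ B) := by simpa [List.append_assoc] using h
  by_cases hc : s.length + x.length ≤ A.length + N.length
  · left
    have hpre : s ++ x <+: A ++ (N ++ B) := ⟨t, h⟩
    have hpre2 : A ++ N <+: A ++ (N ++ B) := by
      refine ⟨B, by simp [List.append_assoc]⟩
    have h1 : s ++ x <+: A ++ N :=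
      List.prefix_of_prefix_length_le hpre hpre2 (by simp; omega)
    exact ((List.suffix_append s x).isInfix).trans h1.isInfix
  · right
    have hs : A.length ≤ s.length := by omega
    have h2 : x ++ t = List.drop (s.length - A.length) (N ++ B) := by
      have := congrArg (List.drop s.length) h'
      rwa [List.drop_left, List.drop_append,
        List.drop_eq_nil_of_le hs, List.nil_append] at this
    have h3 : x ++ t <:+ N ++ B := h2 ▸ List.drop_suffix _ _
    exact ((List.prefix_append x t).isInfix).trans h3.isInfix

/-- Splitting an infix of a word built from chunks separated by blocks `replicate (p+1) no`. -/
lemma aux_chunks {p : ℕ} {no : β} {x : List β} (hlen : x.length ≤ p) :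
    ∀ (cs : List (List β)) (A : List β),
      x <:+: A ++ (cs.map (fun c => List.replicate (p + 1) no ++ c)).flatten →
      x <:+: A ++ List.replicate (p + 1) no ∨
        ∃ c ∈ cs, x <:+: (List.replicate (p + 1) no ++ c) ++ List.replicate (p + 1) no := by
  intro cs
  induction cs with
  | nil =>
    intro A hx
    simp only [List.map_nil, List.flatten_nil, List.append_nil] at hx
    exact Or.inl (hx.trans (List.prefix_append A _).isInfix)
  | cons c cs ih =>
    intro A hx
    simp only [List.map_cons, List.flatten_cons] at hx
    have hx' : x <:+: A ++ (List.replicate (p + 1) no ++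
        (c ++ (cs.map (fun c => List.replicate (p + 1) no ++ c)).flatten)) := by
      simpa [List.append_assoc] using hx
    rcases aux_split (by simp) hlen hx' with h | h
    · exact Or.inl h
    · have h' : x <:+: (List.replicate (p + 1) no ++ c) ++
          (cs.map (fun c => List.replicate (p + 1) no ++ c)).flatten := by
        simpa [List.append_assoc] using h
      rcases ih _ h' with h'' | ⟨c', hc', h''⟩
      · exact Or.inr ⟨c, List.mem_cons_self, h''⟩
      · exact Or.inr ⟨c', List.mem_cons_of_mem _ hc', h''⟩

/-- A proper sublist is a sublist of some `eraseIdx`. -/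
lemma aux_eraseIdx {l' l : List β} (h : l' <+ l) (hne : l' ≠ l) :
    ∃ i < l.length, l' <+ l.eraseIdx i := by
  induction h with
  | slnil => exact absurd rfl hne
  | @cons l₁ l₂ a h ih =>
    exact ⟨0, by simp, by simpa using h⟩
  | @cons_cons l₁ l₂ a h ih =>
    have hne' : l₁ ≠ l₂ := fun he => hne (by rw [he])
    obtain ⟨i, hi, hsub⟩ := ih hne'
    exact ⟨i + 1, by simpa using hi, by simpa using hsub.cons₂ a⟩

end Aux

/-- If `map some u` is a subsequence of a short infix of `map some w ++ $^{p+1}`,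
then `u` is a `p`-subsequence of `w`. -/
lemma aux_left {α : Type*} {p : ℕ} {u w : List α} {x : List (Option α)}
    (hlen : x.length ≤ p)
    (hx : x <:+: w.map some ++ List.replicate (p + 1) (none : Option α))
    (hsub : u.map some <+ x) : PSubseq p u w := by
  obtain ⟨s, t, h⟩ := hx
  set A : List (Option α) := w.map some with hA
  set N : List (Option α) := List.replicate (p + 1) none with hN
  set k : ℕ := A.length - s.length with hk
  have h' : s ++ (x ++ t) = A ++ N := by simpa [List.append_assoc] using h
  -- the first part of x lies in A
  have h1 : x.take k <:+: A := by
    rcases le_or_gt s.length A.length with hs | hs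
    · have := congrArg (List.take A.length) h'
      rw [List.take_left, List.take_append,
        List.take_of_length_le hs, List.take_append] at this
      exact ⟨s, List.take (A.length - s.length - x.length) t, by
        simp only [List.append_assoc, ← hk] at this ⊢
        exact this⟩
    · have hk0 : k = 0 := by omega
      rw [hk0, List.take_zero]
      exact List.nil_infix
  -- the rest of x is all `none`
  have h2 : x.drop k <+ N := by
    have hs : A.length ≤ s.length + k := by omega
    have e0 : x ++ t = List.drop s.length (A ++ N) := by
      rw [← h', List.drop_left]
    have e1 : x.drop k ++ t.drop (k - x.length) =
        List.drop k (List.drop s.length (A ++ N)) := by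
      rw [← e0, List.drop_append]
    have e2 : List.drop k (List.drop s.length (A ++ N)) =
        List.drop (s.length + k - A.length) N := by
      rw [List.drop_drop, List.drop_append,
        List.drop_eq_nil_of_le (by omega), List.nil_append]
    have hpre : x.drop k <+: List.drop (s.length + k - A.length) N :=
      ⟨t.drop (k - x.length), e1.trans e2⟩
    exact hpre.sublist.trans (List.drop_sublist _ _)
  have h3 : (x.drop k).filterMap id = [] := by
    rw [List.filterMap_eq_nil_iff]
    intro a ha
    have := h2.subset ha
    simpa [hN] using List.eq_of_mem_replicate this
  -- extract the witness
  refine ⟨(x.take k).filterMap id, ?_, ?_, ?_⟩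
  · have := h1.filterMap (id : Option α → Option α)
    simpa [hA, List.filterMap_map] using this
  · calc ((x.take k).filterMap id).length ≤ (x.take k).length :=
          List.length_filterMap_le _ _
      _ ≤ x.length := List.length_take_le' k x
      _ ≤ p := hlen
  · have := hsub.filterMap (id : Option α → Option α)
    rw [show x = x.take k ++ x.drop k from (List.take_append_drop k x).symm,
      List.filterMap_append, h3, List.append_nil] at this
    simpa [List.filterMap_map] using this

/-- Words over `Σ ∪ {$}` are modelled as lists over `Option α`, where the extra letter `$`
is `none` and letters of `Σ` are embedded by `some`. Let `u ∈ Σ^m` with `m ≥ 1`, `w` a word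
over `Σ`, and `m ≤ p`. Set `v = w $^{p+1} u_1 $^{p+1} u_2 ... $^{p+1} u_m`, where `u_i` is
obtained from `u` by deleting its `i`-th letter. Then `u` is a minimal absent
`p`-subsequence of `v` iff `u` is `p`-absent from `w`. -/
theorem pmas_of_padded_word_iff_absent {α : Type*} (u w : List α) (p : ℕ)
    (hm : 1 ≤ u.length) (hp : u.length ≤ p) :
    PMAS p (u.map some)
      ((w.map some : List (Option α)) ++
        (List.ofFn (fun i : Fin u.length =>
          List.replicate (p + 1) (none : Option α) ++ (u.eraseIdx i).map some)).flatten) ↔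
      ¬PSubseq p u w := by
  constructor
  · rintro ⟨habs, -⟩ ⟨y, hy, hylen, hysub⟩
    exact habs ⟨y.map some, (hy.map some).trans (List.prefix_append _ _).isInfix,
      by simpa using hylen, hysub.map some⟩
  · intro habs
    constructor
    · rintro ⟨x, hx, hxlen, hxsub⟩
      have hx' : x <:+: w.map some ++
          (((List.ofFn fun i : Fin u.length => (u.eraseIdx i).map some).map
            (fun c => List.replicate (p + 1) (none : Option α) ++ c)).flatten) := by
        rw [List.map_ofFn]
        exact hx
      rcases aux_chunks hxlen _ _ hx' with h | ⟨c, hc, h⟩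
      · exact habs (aux_left hxlen h hxsub)
      · rw [List.mem_ofFn] at hc
        obtain ⟨i, rfl⟩ := hc
        have h1 : u.map some <+ List.replicate (p + 1) (none : Option α) ++
            (u.eraseIdx i).map some ++ List.replicate (p + 1) (none : Option α) :=
          hxsub.trans h.sublist
        have h2 := h1.filterMap (id : Option α → Option α)
        simp only [List.filterMap_append, List.filterMap_map] at h2
        have hrep : List.filterMap (id : Option α → Option α)
            (List.replicate (p + 1) (none : Option α)) = [] := by
          rw [List.filterMap_eq_nil_iff]
          intro a ha
          simpa using List.eq_of_mem_replicate ha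
        rw [hrep] at h2
        have h3 : u <+ u.eraseIdx i := by
          simpa [Function.comp] using h2
        have h4 := h3.length_le
        rw [List.length_eraseIdx] at h4
        have := i.isLt
        simp only [this, if_true] at h4
        omega
    · intro v' hv' hne
      obtain ⟨u', hu', rfl⟩ := List.sublist_map_iff.mp hv'
      have hne' : u' ≠ u := fun he => hne (by rw [he])
      obtain ⟨i, hi, hsub⟩ := aux_eraseIdx hu' hne'
      refine ⟨(u.eraseIdx i).map some, ?_, ?_, hsub.map some⟩
      · have hmem : (List.replicate (p + 1) (none : Option α) ++ (u.eraseIdx i).map some) ∈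
            List.ofFn (fun j : Fin u.length =>
              List.replicate (p + 1) (none : Option α) ++ (u.eraseIdx j).map some) := by
          rw [List.mem_ofFn]
          exact ⟨⟨i, hi⟩, rfl⟩
        have h1 := List.infix_of_mem_flatten hmem
        exact (((List.suffix_append _ _).isInfix).trans h1).trans
          (List.suffix_append _ _).isInfix
      · rw [List.length_map, List.length_eraseIdx, if_pos hi]
        omega
end

section
/- Let Sigma be a finite alphabet with sigma letters, $ a letter not in Sigma, and phi the morphism on words over Sigma defined by phi(a) = a $^{sigma-1} for each a in Sigma. Then for every word u over Sigma, every word w over Sigma, and every integer p_0 >= 1: u is a p_0-subsequence of w if and only if u is a (p_0 * sigma)-subsequence of phi(w). -/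
open List

/-- The morphism `phi(a) = a $^{σ-1}`, where words over `Σ ∪ {$}` are modelled as lists
over `Option α` (`$` is `none`, letters of `Σ` are embedded by `some`), and `σ` is the
number of letters of `Σ`. -/
def phi {α : Type*} [Fintype α] (w : List α) : List (Option α) :=
  w.flatMap (fun a => some a :: List.replicate (Fintype.card α - 1) (none : Option α))

/-- Generalized version of `phi` with an explicit padding amount. -/
def Phi {α : Type*} (m : ℕ) (w : List α) : List (Option α) :=
  w.flatMap (fun a => some a :: List.replicate m (none : Option α))

lemma Phi_cons {α : Type*} (m : ℕ) (a : α) (w : List α) :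
    Phi m (a :: w) = some a :: (List.replicate m (none : Option α) ++ Phi m w) := by
  simp [Phi]

lemma Phi_append {α : Type*} (m : ℕ) (v w : List α) :
    Phi m (v ++ w) = Phi m v ++ Phi m w := by
  simp [Phi]

lemma length_Phi {α : Type*} (m : ℕ) (w : List α) :
    (Phi m w).length = (m + 1) * w.length := by
  induction w with
  | nil => simp [Phi]
  | cons a w ih => rw [Phi_cons]; simp only [length_cons, length_append, length_replicate, ih]; ring

lemma map_some_sublist_Phi {α : Type*} (m : ℕ) (w : List α) :
    w.map some <+ Phi m w := by
  induction w with
  | nil => simp [Phi]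
  | cons a w ih =>
    rw [Phi_cons, map_cons]
    exact (ih.trans (sublist_append_right _ _)).cons₂ _

lemma prefix_append_cases {β : Type*} {l s t : List β} (h : l <+: s ++ t) :
    l <+: s ∨ ∃ l', l = s ++ l' ∧ l' <+: t := by
  rcases le_or_gt l.length s.length with hle | hlt
  · exact Or.inl (prefix_of_prefix_length_le h (prefix_append s t) hle)
  · obtain ⟨l', rfl⟩ := prefix_of_prefix_length_le (prefix_append s t) h hlt.le
    obtain ⟨r, hr⟩ := h
    rw [append_assoc] at hr
    exact Or.inr ⟨l', rfl, ⟨r, (append_cancel_left hr)⟩⟩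

lemma suffix_Phi {α : Type*} (m : ℕ) :
    ∀ {w : List α} {y : List (Option α)}, y <:+ Phi m w →
      ∃ (k : ℕ) (w' : List α), w' <:+ w ∧ y = List.replicate k (none : Option α) ++ Phi m w' := by
  intro w
  induction w with
  | nil =>
    intro y hy
    simp only [Phi, flatMap_nil, suffix_nil] at hy
    exact ⟨0, [], suffix_rfl, by simp [Phi, hy]⟩
  | cons a w ih =>
    intro y hy
    rw [Phi_cons, suffix_cons_iff] at hy
    rcases hy with rfl | hy
    · exact ⟨0, a :: w, suffix_rfl, by simp [Phi_cons]⟩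
    · rcases le_or_gt y.length (Phi m w).length with hle | hlt
      · obtain ⟨k, w', hw', rfl⟩ := ih (suffix_of_suffix_length_le hy (suffix_append _ _) hle)
        exact ⟨k, w', hw'.trans (suffix_cons a w), rfl⟩
      · obtain ⟨y₁, rfl⟩ := suffix_of_suffix_length_le (suffix_append _ _) hy hlt.le
        obtain ⟨s, hs⟩ := hy
        rw [← append_assoc] at hs
        have h1 : s ++ y₁ = List.replicate m (none : Option α) := append_cancel_right hs
        have h2 : y₁ <:+ List.replicate m (none : Option α) := ⟨s, h1⟩
        have h3 : y₁ = List.replicate y₁.length (none : Option α) :=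
          eq_replicate_of_mem fun b hb => eq_of_mem_replicate (h2.sublist.subset hb)
        exact ⟨y₁.length, w, suffix_cons a w, by rw [← h3]⟩

lemma prefix_Phi {α : Type*} (m : ℕ) :
    ∀ {w : List α} {x : List (Option α)}, x <+: Phi m w →
      x.filterMap id <+: w ∧ (m + 1) * (x.filterMap id).length ≤ x.length + m := by
  intro w
  induction w with
  | nil =>
    intro x hx
    simp only [Phi, flatMap_nil, prefix_nil] at hx
    simp [hx]
  | cons a w ih =>
    intro x hx
    rw [Phi_cons] at hx
    match x with
    | [] => simp
    | b :: x' =>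
      rw [cons_prefix_cons] at hx
      obtain ⟨rfl, hx'⟩ := hx
      rcases prefix_append_cases hx' with h | ⟨x'', rfl, hx''⟩
      · have hnil : x'.filterMap id = [] := by
          rw [filterMap_eq_nil_iff]
          intro b hb
          have := eq_of_mem_replicate (h.sublist.subset hb)
          simp [this]
        constructor
        · simp [hnil, show x'.filterMap (fun x => x) = [] from hnil, cons_prefix_cons]
        · simp only [filterMap_cons, hnil, show x'.filterMap (fun x => x) = [] from hnil, id]
          simp only [length_cons, length_nil]
          nlinarith [Nat.zero_le x'.length]
      · obtain ⟨h1, h2⟩ := ih hx''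
        have hrep : (List.replicate m (none : Option α)).filterMap id = [] := by
          rw [filterMap_eq_nil_iff]; intro b hb; simp [eq_of_mem_replicate hb]
        constructor
        · simpa [filterMap_append, hrep, cons_prefix_cons] using h1
        · simp only [filterMap_cons, filterMap_append, hrep,
            show (List.replicate m (none : Option α)).filterMap (fun x => x) = [] from hrep, id, nil_append, length_cons,
            length_append, length_replicate]
          nlinarith [show (m + 1) * (x''.filterMap (fun x => x)).length ≤ x''.length + m from h2]

/-- For every word `u` over `Σ`, every word `w` over `Σ`, and every integer `p₀ ≥ 1`:
`u` is a `p₀`-subsequence of `w` iff `u` is a `(p₀ * σ)`-subsequence of `phi(w)`. -/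
theorem psubseq_iff_psubseq_phi {α : Type*} [Fintype α] (u w : List α) (p₀ : ℕ)
    (hp : 1 ≤ p₀) :
    PSubseq p₀ u w ↔ PSubseq (p₀ * Fintype.card α) (u.map some) (phi w) := by
  have hphi : phi w = Phi (Fintype.card α - 1) w := rfl
  rcases Nat.eq_zero_or_pos (Fintype.card α) with hσ | hσ
  · -- empty alphabet: w = []
    have hw : w = [] := by
      cases w with
      | nil => rfl
      | cons a _ => exact ((Fintype.card_eq_zero_iff.mp hσ).false a).elim
    subst hw
    constructor
    · rintro ⟨v, hv, -, hs⟩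
      rw [infix_nil] at hv; subst hv
      rw [sublist_nil] at hs; subst hs
      exact ⟨[], by simp [phi, Phi], by simp, by simp⟩
    · rintro ⟨v, hv, -, hs⟩
      rw [show phi ([] : List α) = [] from rfl, infix_nil] at hv; subst hv
      rw [sublist_nil] at hs
      have : u = [] := by cases u with
        | nil => rfl
        | cons a _ => simp at hs
      exact ⟨[], by simp, by simp, by simp [this]⟩
  · set m := Fintype.card α - 1 with hm
    have hcard : Fintype.card α = m + 1 := by omega
    rw [hphi, hcard]
    constructor
    · rintro ⟨v, hv, hlen, hs⟩
      refine ⟨Phi m v, ?_, ?_, ?_⟩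
      · obtain ⟨s, t, rfl⟩ := hv
        exact ⟨Phi m s, Phi m t, by rw [← Phi_append, ← Phi_append]⟩
      · rw [length_Phi]
        calc (m + 1) * v.length ≤ (m + 1) * p₀ := by
              exact Nat.mul_le_mul_left _ hlen
          _ = p₀ * (m + 1) := by ring
      · exact (hs.map some).trans (map_some_sublist_Phi m v)
    · rintro ⟨x, hx, hlen, hs⟩
      obtain ⟨y, hxy, hy⟩ := infix_iff_prefix_suffix.mp hx
      obtain ⟨k, w', hw', rfl⟩ := suffix_Phi m hy
      have hu : u <+ x.filterMap id := by
        have h := hs.filterMap id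
        rwa [filterMap_map, show (id ∘ some : α → Option α) = some from rfl,
          filterMap_some] at h
      rcases prefix_append_cases hxy with h | ⟨x', rfl, hx'⟩
      · have hnil : x.filterMap id = [] := by
          rw [filterMap_eq_nil_iff]
          intro b hb
          simp [eq_of_mem_replicate (h.sublist.subset hb)]
        rw [hnil, sublist_nil] at hu
        exact ⟨[], ⟨[], w, rfl⟩, by simp, by simp [hu]⟩
      · obtain ⟨h1, h2⟩ := prefix_Phi m hx'
        have hrep : (List.replicate k (none : Option α)).filterMap id = [] := by
          rw [filterMap_eq_nil_iff]; intro b hb; simp [eq_of_mem_replicate hb]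
        rw [filterMap_append, hrep, nil_append] at hu
        refine ⟨x'.filterMap id, h1.isInfix.trans hw'.isInfix, ?_, hu⟩
        have hxl : x'.length ≤ p₀ * (m + 1) := by
          have := hlen; simp only [length_append, length_replicate] at this; omega
        have : (m + 1) * (x'.filterMap id).length < (m + 1) * (p₀ + 1) := by nlinarith
        exact Nat.lt_succ_iff.mp (Nat.lt_of_mul_lt_mul_left this)
end

section
/- Let Sigma be a finite alphabet, let u in Sigma^m with m >= 1, and for 1 <= i <= m-1 let u_i be a word of length |Sigma| in which every letter of Sigma occurs exactly once and whose last letter is u[i]. Then u is not a subsequence of the concatenation u_1 u_2 ... u_{m-1}. -/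
open List

/-- Key step: if `a` occurs exactly once in `b` and is its last letter, then matching
`a :: v'` inside `b ++ rest` forces `v'` to be matched inside `rest`. -/
lemma step_lemma {α : Type*} [DecidableEq α] {a : α} {v' b rest : List α}
    (hc : b.count a = 1) (hl : b.getLast? = some a)
    (h : a :: v' <+ b ++ rest) : v' <+ rest := by
  obtain ⟨b', rfl⟩ : ∃ b', b = b' ++ [a] := by
    rcases List.getLast?_eq_some_iff.mp hl with ⟨l', hl'⟩
    exact ⟨l', hl'⟩
  have hnot : a ∉ b' := by
    intro hmem
    have h1 : 1 ≤ b'.count a := List.count_pos_iff.mpr hmem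
    have h2 : (b' ++ [a]).count a = b'.count a + 1 := by simp [List.count_append]
    omega
  rw [List.sublist_append_iff] at h
  obtain ⟨l₁, l₂, heq, h1, h2⟩ := h
  cases l₁ with
  | nil =>
    simp only [List.nil_append] at heq
    subst heq
    exact (List.sublist_cons_self a v').trans h2
  | cons x l₁' =>
    simp only [List.cons_append, List.cons.injEq] at heq
    obtain ⟨hx, hv⟩ := heq
    subst hx
    rw [List.sublist_append_iff] at h1
    obtain ⟨s, t, hst, hs, ht⟩ := h1
    cases s with
    | nil =>
      simp only [List.nil_append] at hst
      subst hst
      have hlen := ht.length_le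
      rw [List.length_cons, List.length_singleton] at hlen
      have : l₁' = [] := List.eq_nil_of_length_eq_zero (by omega)
      subst this
      simp only [List.nil_append] at hv
      subst hv
      exact h2
    | cons y s' =>
      have hy : y = a := by
        simp only [List.cons_append, List.cons.injEq] at hst
        exact hst.1.symm
      subst hy
      exact absurd (hs.subset List.mem_cons_self) hnot

/-- Main induction. -/
lemma aux_lemma {α : Type*} [DecidableEq α] :
    ∀ (bs : List (List α)) (v : List α),
      (∀ k (hk : k < bs.length) (hv : k < v.length),
        (bs.get ⟨k, hk⟩).count (v.get ⟨k, hv⟩) = 1 ∧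
        (bs.get ⟨k, hk⟩).getLast? = some (v.get ⟨k, hv⟩)) →
      bs.length < v.length → ¬ v <+ bs.flatten := by
  intro bs
  induction bs with
  | nil =>
    rintro (_ | ⟨a, v⟩) _ hlen h
    · simp at hlen
    · simp at h
  | cons b bs' ih =>
    rintro (_ | ⟨a, v'⟩) hk hlen h
    · simp at hlen
    · have h0 := hk 0 (by simp) (by simp)
      simp only [List.get] at h0
      have hv' : v' <+ bs'.flatten := by
        rw [List.flatten_cons] at h
        exact step_lemma (h0.1) (h0.2) h
      refine ih v' ?_ (by simpa using Nat.lt_of_succ_lt_succ (by simpa using hlen)) hv'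
      intro k hk' hv
      have := hk (k + 1) (by simpa using Nat.succ_lt_succ hk') (by simpa using Nat.succ_lt_succ hv)
      simpa using this

/-- Let `Σ` be a finite alphabet, `u ∈ Σ^m` with `m ≥ 1`, and for `1 ≤ i ≤ m-1` let `u_i`
be a word in which every letter of `Σ` occurs exactly once (hence of length `|Σ|`) and whose
last letter is `u[i]`. Then `u` is not a subsequence of `u_1 u_2 ... u_{m-1}`. -/
theorem not_sublist_of_permutation_blocks {α : Type*} [Fintype α] [DecidableEq α]
    (u : List α) (hm : 1 ≤ u.length)
    (ui : Fin (u.length - 1) → List α)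
    (hcount : ∀ i : Fin (u.length - 1), ∀ a : α, (ui i).count a = 1)
    (hlast : ∀ i : Fin (u.length - 1),
      (ui i).getLast? = some (u.get (i.castLE (Nat.sub_le u.length 1)))) :
    ¬ u <+ (List.ofFn ui).flatten := by
  apply aux_lemma
  · intro k hk hv
    simp only [List.length_ofFn] at hk
    have hget : (List.ofFn ui).get ⟨k, by simpa using hk⟩ = ui ⟨k, hk⟩ := by
      simp [List.get_ofFn]
    rw [hget]
    refine ⟨hcount _ _, ?_⟩
    have := hlast ⟨k, hk⟩
    convert this using 2
    rfl
  · simp only [List.length_ofFn]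
    omega
end

section
/- Let Sigma be a finite alphabet with sigma letters, $ a letter not in Sigma, and phi the morphism with phi(a) = a $^{sigma-1} for a in Sigma. Let u in Sigma^m with m >= 1, let w be a word over Sigma, let p_0 be an integer with m <= p_0, and for 1 <= i <= m-1 let u_i be a word of length sigma in which every letter of Sigma occurs exactly once and whose last letter is u[i]. Set w' = phi(w) $^{3 * p_0 * sigma} u_1 u_2 ... u_{m-1} and p = p_0 * sigma. Then u is a minimal absent p-subsequence (pMAS) of w' if and only if u is not a p_0-subsequence of w. -/
open List

section Aux

variable {α : Type*}

lemma redOpt_eq_nil {x : List (Option α)} (h : ∀ o ∈ x, o = none) :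
    x.reduceOption = [] := by
  induction x with
  | nil => rfl
  | cons o t ih =>
    have ho := h o (mem_cons_self)
    subst ho
    simp only [reduceOption_cons_of_none]
    exact ih fun o ho => h o (mem_cons_of_mem _ ho)

lemma map_some_redOpt_sublist (x : List (Option α)) : x.reduceOption.map some <+ x := by
  induction x with
  | nil => simp
  | cons o t ih =>
    cases o with
    | none => simpa [reduceOption_cons_of_none] using ih.cons none
    | some a => simpa [reduceOption_cons_of_some] using ih.cons₂ (some a)

lemma redOpt_map_some (l : List α) : (l.map some).reduceOption = l := by
  induction l with
  | nil => rfl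
  | cons a t ih => simp [reduceOption_cons_of_some, ih]

lemma map_some_sublist_iff {v : List α} {x : List (Option α)} :
    v.map some <+ x ↔ v <+ x.reduceOption := by
  constructor
  · intro h
    have h2 := h.filterMap id
    simpa [List.reduceOption, List.filterMap_map] using h2
  · intro h
    exact (h.map some).trans (map_some_redOpt_sublist x)

lemma infix_redOpt {x z : List (Option α)} (h : x <:+: z) :
    x.reduceOption <:+: z.reduceOption := by
  obtain ⟨s, t, rfl⟩ := h
  exact ⟨s.reduceOption, t.reduceOption, by simp [reduceOption_append]⟩

lemma suffix_of_suffix_append {x a m : List α} (h : x <:+ a ++ m)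
    (hl : x.length ≤ m.length) : x <:+ m := by
  obtain ⟨t, ht⟩ := h
  have hlen : a.length ≤ t.length := by
    have := congrArg length ht; simp at this; omega
  refine ⟨t.drop a.length, ?_⟩
  have h2 := congrArg (List.drop a.length) ht
  rwa [drop_append, Nat.sub_eq_zero_of_le hlen, drop_zero,
    drop_left] at h2

lemma infix_append_cases {x a c : List α} (h : x <:+: a ++ c) :
    x <:+: a ∨ x <:+: c ∨ ∃ x₁ x₂, x = x₁ ++ x₂ ∧ x₁ <:+ a ∧ x₂ <+: c := by
  obtain ⟨s, t, hst⟩ := h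
  by_cases h1 : s.length + x.length ≤ a.length
  · left
    have h3 := congrArg (List.take a.length) hst
    rw [take_left] at h3
    rw [take_append,
      take_of_length_le (show (s ++ x).length ≤ a.length by simp; omega)] at h3
    exact ⟨s, t.take (a.length - (s ++ x).length), h3⟩
  · by_cases h2 : a.length ≤ s.length
    · right; left
      have h3 := congrArg (List.drop a.length) hst
      rw [drop_left] at h3
      rw [drop_append, drop_append,
        Nat.sub_eq_zero_of_le h2, drop_zero,
        show a.length - (s ++ x).length = 0 by simp; omega, drop_zero] at h3
      exact ⟨s.drop a.length, t, h3⟩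
    · right; right
      push_neg at h1 h2
      refine ⟨x.take (a.length - s.length), x.drop (a.length - s.length),
        (take_append_drop _ _).symm, ⟨s, ?_⟩, ⟨t, ?_⟩⟩
      · have h3 := congrArg (List.take a.length) hst
        rw [take_left] at h3
        rw [take_append,
          show a.length - (s ++ x).length = 0 by simp; omega, take_zero, append_nil,
          take_append, take_of_length_le (le_of_lt h2)] at h3
        exact h3
      · have h3 := congrArg (List.drop a.length) hst
        rw [drop_left] at h3
        rw [drop_append,
          show a.length - (s ++ x).length = 0 by simp; omega, drop_zero,
          drop_append, drop_eq_nil_of_le (le_of_lt h2), nil_append] at h3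
        exact h3

lemma head_forces_last {c : α} {r B : List α} (h : c :: r <+ B ++ [c]) (hc : c ∉ B) :
    r = [] := by
  rcases sublist_append_iff.mp h with ⟨l₁, l₂, heq, h₁, h₂⟩
  cases l₁ with
  | nil =>
    rw [nil_append] at heq
    subst heq
    exact sublist_nil.mp (cons_sublist_cons.mp h₂)
  | cons d l₁' =>
    have hd : d ∈ B := h₁.subset (mem_cons_self)
    have : c = d := by simpa using congrArg (·.head?) heq
    exact absurd (this ▸ hd) hc

lemma not_long_sublist : ∀ (L : List (List α)) (v : List α),
    (∀ i (h1 : i < v.length) (h2 : i < L.length),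
      ∃ B, L[i] = B ++ [v[i]] ∧ v[i] ∉ B) →
    v <+ L.flatten → v.length ≤ L.length := by
  intro L
  induction L with
  | nil =>
    intro v _ hv
    simp [sublist_nil.mp (by simpa using hv)]
  | cons B L' ih =>
    intro v hcond hv
    cases v with
    | nil => simp
    | cons c v' =>
      rw [flatten_cons] at hv
      have hv' : v' <+ L'.flatten := by
        rcases sublist_append_iff.mp hv with ⟨v₁, v₂, heq, h₁, h₂⟩
        cases v₁ with
        | nil =>
          rw [nil_append] at heq; subst heq
          exact (sublist_cons_self c v').trans h₂
        | cons d v₁' =>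
          obtain ⟨hcd, hv'eq⟩ : c = d ∧ v' = v₁' ++ v₂ := by
            constructor
            · simpa using congrArg (·.head?) heq
            · simpa using congrArg (·.tail) heq
          subst hcd
          obtain ⟨B₀, hB₀, hcB₀⟩ := hcond 0 (by simp) (by simp)
          simp only [getElem_cons_zero] at hB₀ hcB₀
          have : v₁' = [] := head_forces_last (hB₀ ▸ h₁) hcB₀
          subst this
          simpa [hv'eq] using h₂
      have := ih v' (fun i h1 h2 => by
        have := hcond (i + 1) (by simpa using Nat.succ_lt_succ h1)
          (by simpa using Nat.succ_lt_succ h2)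
        simpa using this) hv'
      simpa using Nat.succ_le_succ this

lemma sublist_flatten_of_mem : ∀ (L : List (List α)) (v : List α), v.length ≤ L.length →
    (∀ i (h1 : i < v.length) (h2 : i < L.length), v[i] ∈ L[i]) → v <+ L.flatten := by
  intro L
  induction L with
  | nil =>
    intro v h _
    have hv : v.length = 0 := by simpa using h
    simp [length_eq_zero_iff.mp hv]
  | cons B L' ih =>
    intro v hl hmem
    cases v with
    | nil => simp
    | cons c v' =>
      rw [flatten_cons]
      have hc : [c] <+ B := singleton_sublist.mpr (hmem 0 (by simp) (by simp))
      have h2 : v' <+ L'.flatten := by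
        refine ih v' (by simpa using hl) (fun i h1 h2 => ?_)
        have := hmem (i + 1) (by simpa using Nat.succ_lt_succ h1)
          (by simpa using Nat.succ_lt_succ h2)
        simpa using this
      simpa using hc.append h2

end Aux

section Phi

variable {α : Type*} [Fintype α]

lemma redOpt_phi (w : List α) : (phi w).reduceOption = w := by
  induction w with
  | nil => rfl
  | cons a t ih =>
    show ((some a :: replicate (Fintype.card α - 1) none) ++ phi t).reduceOption = a :: t
    rw [reduceOption_append, reduceOption_cons_of_some,
      redOpt_eq_nil (fun o ho => eq_of_mem_replicate ho), ih]
    rfl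

lemma phi_infix {f w' : List α} (h : f <:+: w') : phi f <:+: phi w' := by
  obtain ⟨s, t, rfl⟩ := h
  exact ⟨phi s, phi t, by simp [phi, flatMap_append]⟩

lemma length_phi (hσ : 1 ≤ Fintype.card α) (f : List α) :
    (phi f).length = f.length * Fintype.card α := by
  induction f with
  | nil => simp [phi]
  | cons a t ih =>
    show ((some a :: replicate (Fintype.card α - 1) none) ++ phi t).length = _
    simp only [length_append, length_cons, length_replicate, ih, Nat.add_mul, Nat.one_mul]
    omega

lemma map_some_sublist_phi (f : List α) : f.map some <+ phi f := by
  induction f with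
  | nil => simp [phi]
  | cons a t ih =>
    show some a :: t.map some <+ (some a :: replicate (Fintype.card α - 1) none) ++ phi t
    rw [cons_append]
    exact ((nil_sublist _).append ih).cons₂ (some a)

lemma redOpt_block (a : α) :
    (some a :: replicate (Fintype.card α - 1) (none : Option α)).reduceOption = [a] := by
  rw [reduceOption_cons_of_some, redOpt_eq_nil (fun o ho => eq_of_mem_replicate ho)]

lemma phi_window {w : List α} : ∀ {y : List (Option α)}, y <:+: phi w →
    Fintype.card α * y.reduceOption.length ≤ y.length + (Fintype.card α - 1) := by
  induction w with
  | nil =>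
    intro y h
    have : y = [] := by
      have := h.sublist
      simpa [phi, sublist_nil] using this
    simp [this]
  | cons a t ih =>
    intro y h
    have h' : y <:+: (some a :: replicate (Fintype.card α - 1) none) ++ phi t := h
    rcases infix_append_cases h' with h1 | h1 | ⟨y₁, y₂, rfl, hs, hp⟩
    · have hro : y.reduceOption <+ [a] := by
        have h2 := h1.sublist.filterMap id
        rw [show (some a :: replicate (Fintype.card α - 1) (none : Option α)).filterMap id
          = [a] from redOpt_block a] at h2
        exact h2
      have hle1 : y.reduceOption.length ≤ 1 := by simpa using hro.length_le
      have hle2 : y.reduceOption.length ≤ y.length := by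
        simpa using (map_some_redOpt_sublist y).length_le
      rcases Nat.le_one_iff_eq_zero_or_eq_one.mp hle1 with h0 | h0 <;> rw [h0] <;> omega
    · exact ih h1
    · have ih2 := ih hp.isInfix
      rw [reduceOption_append, length_append]
      by_cases hy1 : y₁.length ≤ Fintype.card α - 1
      · have hsfx : y₁ <:+ replicate (Fintype.card α - 1) (none : Option α) := by
          refine suffix_of_suffix_append (a := [some a]) ?_
            (by simp only [length_replicate]; exact hy1)
          simpa using hs
        rw [redOpt_eq_nil (fun o ho => eq_of_mem_replicate (hsfx.sublist.subset ho))]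
        simp only [length_nil, Nat.zero_add, length_append]
        omega
      · have hy1le : y₁.length ≤ Fintype.card α - 1 + 1 := by
          have := hs.length_le
          simpa using this
        have hy1eq : y₁ = some a :: replicate (Fintype.card α - 1) none := by
          refine hs.sublist.eq_of_length ?_
          simp only [length_cons, length_replicate]
          omega
        have hro1 : y₁.reduceOption = [a] := by rw [hy1eq]; exact redOpt_block a
        rw [hro1]
        simp only [length_singleton, length_append]
        have hexp : Fintype.card α * (1 + y₂.reduceOption.length)
            = Fintype.card α + Fintype.card α * y₂.reduceOption.length := by ring
        have hy1len : y₁.length = Fintype.card α - 1 + 1 := by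
          rw [hy1eq]; simp
        omega

end Phi


/-- Let `u ∈ Σ^m` with `m ≥ 1`, `w` a word over `Σ`, `p₀ ≥ m`, and for `1 ≤ i ≤ m-1` let
`u_i` be a word in which every letter of `Σ` occurs exactly once (hence of length `σ`) and
whose last letter is `u[i]`. Set `w' = phi(w) $^{3 p₀ σ} u_1 u_2 ... u_{m-1}` and
`p = p₀ σ`. Then `u` is a minimal absent `p`-subsequence of `w'` iff `u` is not a
`p₀`-subsequence of `w`. -/
theorem pmas_reduction_from_psubseq_match {α : Type*} [Fintype α] [DecidableEq α]
    (u w : List α) (p₀ : ℕ) (hm : 1 ≤ u.length) (hp : u.length ≤ p₀)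
    (ui : Fin (u.length - 1) → List α)
    (hcount : ∀ i : Fin (u.length - 1), ∀ a : α, (ui i).count a = 1)
    (hlast : ∀ i : Fin (u.length - 1),
      (ui i).getLast? = some (u.get (i.castLE (Nat.sub_le u.length 1)))) :
    PMAS (p₀ * Fintype.card α) (u.map some)
      (phi w ++ List.replicate (3 * p₀ * Fintype.card α) (none : Option α) ++
        ((List.ofFn ui).flatten.map some)) ↔
      ¬PSubseq p₀ u w := by
  classical
  have hne : u ≠ [] := by intro h; rw [h] at hm; simp at hm
  have hnea : Nonempty α := ⟨u.head hne⟩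
  have hσ : 1 ≤ Fintype.card α := Fintype.card_pos
  -- each block has length σ
  have hlenui : ∀ i : Fin (u.length - 1), (ui i).length = Fintype.card α := by
    intro i
    have hmulti : ((ui i : List α) : Multiset α) = (Finset.univ : Finset α).val := by
      refine Multiset.ext.mpr fun a => ?_
      rw [Multiset.coe_count, hcount i a, Multiset.count_univ]
    calc (ui i).length = Multiset.card ((ui i : List α) : Multiset α) :=
          (Multiset.coe_card _).symm
      _ = Finset.univ.card := by rw [hmulti]; rfl
      _ = Fintype.card α := Finset.card_univ
  -- the "only at the last position" condition
  have hcond : ∀ i (h1 : i < u.length) (h2 : i < (List.ofFn ui).length),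
      ∃ B, (List.ofFn ui)[i] = B ++ [u[i]] ∧ u[i] ∉ B := by
    intro i h1 h2
    have h2' : i < u.length - 1 := by simpa using h2
    have hLi : (List.ofFn ui)[i] = ui ⟨i, h2'⟩ := by
      rw [List.getElem_ofFn]
    have hlast' := hlast ⟨i, h2'⟩
    have hnej : ui ⟨i, h2'⟩ ≠ [] := by
      intro h; rw [h] at hlast'; simp at hlast'
    have hgl : (ui ⟨i, h2'⟩).getLast hnej = u[i] := by
      rw [getLast?_eq_getLast hnej] at hlast'
      simpa [List.get_eq_getElem] using hlast'
    have hsplit : ui ⟨i, h2'⟩ = (ui ⟨i, h2'⟩).dropLast ++ [u[i]] := by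
      rw [← hgl]; exact (dropLast_append_getLast hnej).symm
    refine ⟨(ui ⟨i, h2'⟩).dropLast, by rw [hLi, ← hsplit], ?_⟩
    intro hmem
    have hc := hcount ⟨i, h2'⟩ u[i]
    rw [hsplit, List.count_append] at hc
    simp at hc
    exact absurd hc (by simpa [List.count_eq_zero] using hmem)
  -- u is not a subsequence of the flattened blocks
  have hnotF : ¬ u <+ (List.ofFn ui).flatten := by
    intro hsub
    have := not_long_sublist (List.ofFn ui) u hcond hsub
    rw [List.length_ofFn] at this
    omega
  -- the case of a window inside phi w
  have caseA : ∀ y : List (Option α), y <:+: phi w → y.length ≤ p₀ * Fintype.card α →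
      u <+ y.reduceOption → PSubseq p₀ u w := by
    intro y hy hylen hysub
    have hwin := phi_window hy
    have hbound : y.reduceOption.length ≤ p₀ := by
      by_contra hcontra
      push_neg at hcontra
      have h4 : Fintype.card α * (p₀ + 1) ≤ Fintype.card α * y.reduceOption.length :=
        Nat.mul_le_mul_left _ hcontra
      have h5 : Fintype.card α * (p₀ + 1) = Fintype.card α * p₀ + Fintype.card α := by ring
      have h6 : p₀ * Fintype.card α = Fintype.card α * p₀ := Nat.mul_comm _ _
      omega
    refine ⟨y.reduceOption, ?_, hbound, hysub⟩
    have h7 := infix_redOpt hy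
    rwa [redOpt_phi] at h7
  have hMnone : ∀ o ∈ List.replicate (3 * p₀ * Fintype.card α) (none : Option α),
      o = none := fun o ho => eq_of_mem_replicate ho
  -- forward direction
  have forward : PSubseq (p₀ * Fintype.card α) (u.map some)
      (phi w ++ List.replicate (3 * p₀ * Fintype.card α) (none : Option α) ++
        ((List.ofFn ui).flatten.map some)) → PSubseq p₀ u w := by
    rintro ⟨x, hinf, hxlen, hxsub⟩
    have hxsub' : u <+ x.reduceOption := map_some_sublist_iff.mp hxsub
    have hTro : ((List.ofFn ui).flatten.map some).reduceOption = (List.ofFn ui).flatten :=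
      redOpt_map_some _
    rcases infix_append_cases hinf with h1 | h1 | ⟨x₁, x₂, rfl, hsfx, hpfx⟩
    · rcases infix_append_cases h1 with h2 | h2 | ⟨y₁, y₂, rfl, hs2, hp2⟩
      · exact caseA x h2 hxlen hxsub'
      · exfalso
        have h3 : x.reduceOption = [] :=
          redOpt_eq_nil (fun o ho => hMnone o (h2.sublist.subset ho))
        rw [h3] at hxsub'
        exact hne (sublist_nil.mp hxsub')
      · have h3 : y₂.reduceOption = [] :=
          redOpt_eq_nil (fun o ho => hMnone o (hp2.sublist.subset ho))
        rw [reduceOption_append, h3, append_nil] at hxsub'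
        refine caseA y₁ hs2.isInfix ?_ hxsub'
        calc y₁.length ≤ (y₁ ++ y₂).length := by simp
          _ ≤ p₀ * Fintype.card α := hxlen
    · exfalso
      have h2 := infix_redOpt h1
      rw [hTro] at h2
      exact hnotF (hxsub'.trans h2.sublist)
    · exfalso
      have hx1M : x₁ <:+ List.replicate (3 * p₀ * Fintype.card α) (none : Option α) := by
        refine suffix_of_suffix_append hsfx ?_
        rw [List.length_replicate]
        have e1 : 3 * p₀ * Fintype.card α = 3 * (p₀ * Fintype.card α) := by ring
        have e2 : x₁.length ≤ (x₁ ++ x₂).length := by simp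
        have e3 := hxlen
        omega
      have h3 : x₁.reduceOption = [] :=
        redOpt_eq_nil (fun o ho => hMnone o (hx1M.sublist.subset ho))
      rw [reduceOption_append, h3, nil_append] at hxsub'
      have h4 := infix_redOpt hpfx.isInfix
      rw [hTro] at h4
      exact hnotF (hxsub'.trans h4.sublist)
  -- backward direction
  have backward : PSubseq p₀ u w → PSubseq (p₀ * Fintype.card α) (u.map some)
      (phi w ++ List.replicate (3 * p₀ * Fintype.card α) (none : Option α) ++
        ((List.ofFn ui).flatten.map some)) := by
    rintro ⟨f, hinf, hflen, hfsub⟩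
    refine ⟨phi f, ?_, ?_, ?_⟩
    · have h1 : phi f <:+: phi w := phi_infix hinf
      have h2 : phi w <+:
          (phi w ++ List.replicate (3 * p₀ * Fintype.card α) (none : Option α) ++
            ((List.ofFn ui).flatten.map some)) :=
        ⟨List.replicate (3 * p₀ * Fintype.card α) (none : Option α) ++
          ((List.ofFn ui).flatten.map some), by rw [append_assoc]⟩
      exact h1.trans h2.isInfix
    · rw [length_phi hσ]
      exact Nat.mul_le_mul_right _ hflen
    · exact (hfsub.map some).trans (map_some_sublist_phi f)
  -- length of the flattened blocks
  have hFlen : (List.ofFn ui).flatten.length ≤ p₀ * Fintype.card α := by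
    have h1 : (List.ofFn ui).map List.length
        = List.replicate (u.length - 1) (Fintype.card α) := by
      refine List.eq_replicate_iff.mpr ⟨by simp, ?_⟩
      intro b hb
      rw [List.map_ofFn] at hb
      obtain ⟨i, hi⟩ := List.mem_ofFn.mp hb
      rw [← hi]
      exact hlenui i
    rw [List.length_flatten, h1, List.sum_replicate, smul_eq_mul]
    exact Nat.mul_le_mul_right _ (by omega)
  -- minimality
  have minim : ∀ v', v' <+ u.map some → v' ≠ u.map some →
      PSubseq (p₀ * Fintype.card α) v'
        (phi w ++ List.replicate (3 * p₀ * Fintype.card α) (none : Option α) ++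
          ((List.ofFn ui).flatten.map some)) := by
    intro v' hv' hvne
    obtain ⟨v, hvu, rfl⟩ := sublist_map_iff.mp hv'
    have hvnequ : v ≠ u := fun h => hvne (by rw [h])
    have hvlen : v.length < u.length :=
      lt_of_le_of_ne hvu.length_le (fun h => hvnequ (hvu.eq_of_length h))
    have hvF : v <+ (List.ofFn ui).flatten := by
      refine sublist_flatten_of_mem _ v ?_ ?_
      · rw [List.length_ofFn]; omega
      · intro i h1 h2
        rw [List.length_ofFn] at h2
        rw [List.getElem_ofFn]
        have hc := hcount ⟨i, h2⟩ v[i]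
        exact List.count_pos_iff.mp (by omega)
    refine ⟨(List.ofFn ui).flatten.map some, ?_, ?_, hvF.map some⟩
    · have hTsfx : ((List.ofFn ui).flatten.map some : List (Option α)) <:+
          (phi w ++ List.replicate (3 * p₀ * Fintype.card α) (none : Option α) ++
            ((List.ofFn ui).flatten.map some)) :=
        ⟨phi w ++ List.replicate (3 * p₀ * Fintype.card α) (none : Option α), rfl⟩
      exact hTsfx.isInfix
    · rw [List.length_map]; exact hFlen
  constructor
  · intro hpmas hps
    exact hpmas.1 (backward hps)
  · intro hps
    exact ⟨fun h => hps (forward h), minim⟩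
end
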